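/- Let k, n ∈ ℕ with n > 2k, and let S = {0, 1, …, k} ∪ {n−k, n−k+1, …, n}. Then z_S ≤ z_{{0,1,…,k}} + 1/4; in particular z_S = O(log k). -/

import Mathlib

open Real Finset

/-- `g_S(t) = ∑_{e ∈ S} t^(2e)`. -/
noncomputable def gS (S : Finset ℕ) (t : ℝ) : ℝ := ∑ e ∈ S, t ^ (2 * e)

/-- `h_S(t) = ∑_{e ∈ S} e² t^(2e-2)` (the term for `e = 0` being `0`). -/
noncomputable def hS (S : Finset ℕ) (t : ℝ) : ℝ := ∑ e ∈ S, (e : ℝ) ^ 2 * t ^ (2 * e - 2)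

/-- `q_S(t) = ∑_{e ∈ S} e t^(2e-1)` (the term for `e = 0` being `0`). -/
noncomputable def qS (S : Finset ℕ) (t : ℝ) : ℝ := ∑ e ∈ S, (e : ℝ) * t ^ (2 * e - 1)

/-- `E_S(t) = g_S(t) h_S(t) - q_S(t)²`. -/
noncomputable def ES (S : Finset ℕ) (t : ℝ) : ℝ := gS S t * hS S t - qS S t ^ 2

/-- The expected number of real zeros in `(0,1)`, given by the Edelman–Kostlan integral. -/
noncomputable def zS (S : Finset ℕ) : ℝ :=
  (1 / Real.pi) * ∫ t in (0 : ℝ)..1, Real.sqrt (ES S t) / gS S t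

lemma pow_even_nonneg (t : ℝ) (e : ℕ) : 0 ≤ t ^ (2 * e) := by
  rw [pow_mul]; positivity

lemma gS_one_le (S : Finset ℕ) (h0 : 0 ∈ S) (t : ℝ) : 1 ≤ gS S t := by
  have h : ∀ e ∈ S, 0 ≤ t ^ (2 * e) := fun e _ => pow_even_nonneg t e
  have := Finset.single_le_sum h h0
  simpa [gS] using this

lemma gS_pos (S : Finset ℕ) (h0 : 0 ∈ S) (t : ℝ) : 0 < gS S t :=
  lt_of_lt_of_le one_pos (gS_one_le S h0 t)

lemma ES_nonneg (S : Finset ℕ) (t : ℝ) : 0 ≤ ES S t := by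
  have key : qS S t = ∑ e ∈ S, (t ^ e) * ((e : ℝ) * t ^ (e - 1)) := by
    unfold qS
    refine Finset.sum_congr rfl fun e _ => ?_
    rcases Nat.eq_zero_or_pos e with rfl | he
    · simp
    · have h : 2 * e - 1 = e + (e - 1) := by omega
      rw [h, pow_add]; ring
  have csq := Finset.sum_mul_sq_le_sq_mul_sq S (fun e => t ^ e) (fun e => (e : ℝ) * t ^ (e - 1))
  have hg : ∑ e ∈ S, (t ^ e) ^ 2 = gS S t := by
    unfold gS
    refine Finset.sum_congr rfl fun e _ => ?_
    rw [← pow_mul, mul_comm]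
  have hh : ∑ e ∈ S, ((e : ℝ) * t ^ (e - 1)) ^ 2 = hS S t := by
    unfold hS
    refine Finset.sum_congr rfl fun e _ => ?_
    rcases Nat.eq_zero_or_pos e with rfl | he
    · simp
    · have h2 : (e - 1) * 2 = 2 * e - 2 := by omega
      rw [mul_pow, ← pow_mul, h2]
  rw [← key, hg, hh] at csq
  unfold ES
  linarith

lemma cont_gS (S : Finset ℕ) : Continuous fun t => gS S t := by
  unfold gS; exact continuous_finset_sum _ fun e _ => continuous_pow _

lemma cont_hS (S : Finset ℕ) : Continuous fun t => hS S t := by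
  unfold hS; exact continuous_finset_sum _ fun e _ => continuous_const.mul (continuous_pow _)

lemma cont_qS (S : Finset ℕ) : Continuous fun t => qS S t := by
  unfold qS; exact continuous_finset_sum _ fun e _ => continuous_const.mul (continuous_pow _)

lemma cont_ES (S : Finset ℕ) : Continuous fun t => ES S t := by
  unfold ES; exact ((cont_gS S).mul (cont_hS S)).sub ((cont_qS S).pow 2)

lemma cont_density (S : Finset ℕ) (h0 : 0 ∈ S) :
    Continuous fun t => Real.sqrt (ES S t) / gS S t :=
  ((cont_ES S).sqrt).div (cont_gS S) (fun t => ne_of_gt (gS_pos S h0 t))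
lemma Icc_shift (m k : ℕ) : Finset.Icc m (m + k) = Finset.map (addLeftEmbedding m) (Finset.Icc 0 k) := by
  rw [Finset.map_add_left_Icc, Nat.add_zero]

lemma gS_shift (k m : ℕ) (hm : 1 ≤ m) (t : ℝ) :
    gS (Finset.Icc m (m + k)) t = t ^ (2 * m - 2) * t ^ 2 * gS (Finset.Icc 0 k) t := by
  unfold gS
  rw [Icc_shift, Finset.sum_map, Finset.mul_sum]
  refine Finset.sum_congr rfl fun e _ => ?_
  simp only [addLeftEmbedding_apply]
  have h : 2 * (m + e) = (2 * m - 2) + 2 + 2 * e := by omega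
  rw [h, pow_add, pow_add]

lemma qS_shift (k m : ℕ) (hm : 1 ≤ m) (t : ℝ) :
    qS (Finset.Icc m (m + k)) t = t ^ (2 * m - 2) * t ^ 2 * qS (Finset.Icc 0 k) t
      + (m : ℝ) * (t ^ (2 * m - 2) * t) * gS (Finset.Icc 0 k) t := by
  unfold qS gS
  rw [Icc_shift, Finset.sum_map, Finset.mul_sum, Finset.mul_sum, ← Finset.sum_add_distrib]
  refine Finset.sum_congr rfl fun e _ => ?_
  simp only [addLeftEmbedding_apply]
  rcases Nat.eq_zero_or_pos e with rfl | he
  · have h : 2 * (m + 0) - 1 = (2 * m - 2) + 1 := by omega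
    have A : t ^ (2 * m - 1) = t ^ (2 * m - 2) * t := by
      rw [show 2 * m - 1 = (2 * m - 2) + 1 from by omega, pow_add, pow_one]
    simp only [Nat.add_zero, Nat.mul_zero, Nat.zero_sub, Nat.cast_zero, pow_zero, zero_mul,
      mul_zero, mul_one, add_zero, zero_add]
    linear_combination (m : ℝ) * A
  · have h1 : 2 * (m + e) - 1 = (2 * m - 2) + 2 + (2 * e - 1) := by omega
    have h2 : 2 * (m + e) - 1 = (2 * m - 2) + 1 + 2 * e := by omega
    have A : t ^ (2 * (m + e) - 1) = t ^ (2 * m - 2) * t ^ 2 * t ^ (2 * e - 1) := by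
      rw [h1, pow_add, pow_add]
    have B : t ^ (2 * (m + e) - 1) = t ^ (2 * m - 2) * t * t ^ (2 * e) := by
      rw [h2, pow_add, pow_add, pow_one]
    push_cast
    linear_combination (e : ℝ) * A + (m : ℝ) * B

lemma hS_shift (k m : ℕ) (hm : 1 ≤ m) (t : ℝ) :
    hS (Finset.Icc m (m + k)) t = t ^ (2 * m - 2) * t ^ 2 * hS (Finset.Icc 0 k) t
      + 2 * (m : ℝ) * (t ^ (2 * m - 2) * t) * qS (Finset.Icc 0 k) t
      + (m : ℝ) ^ 2 * t ^ (2 * m - 2) * gS (Finset.Icc 0 k) t := by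
  unfold hS qS gS
  rw [Icc_shift, Finset.sum_map, Finset.mul_sum, Finset.mul_sum, Finset.mul_sum,
    ← Finset.sum_add_distrib, ← Finset.sum_add_distrib]
  refine Finset.sum_congr rfl fun e _ => ?_
  simp only [addLeftEmbedding_apply]
  rcases Nat.eq_zero_or_pos e with rfl | he
  · have h : 2 * (m + 0) - 2 = 2 * m - 2 := by omega
    push_cast
    norm_num
  · have h0 : 2 * (m + e) - 2 = (2 * m - 2) + 2 + (2 * e - 2) := by omega
    have h1 : 2 * (m + e) - 2 = (2 * m - 2) + 1 + (2 * e - 1) := by omega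
    have h2 : 2 * (m + e) - 2 = (2 * m - 2) + 2 * e := by omega
    have A0 : t ^ (2 * (m + e) - 2) = t ^ (2 * m - 2) * t ^ 2 * t ^ (2 * e - 2) := by
      rw [h0, pow_add, pow_add]
    have A1 : t ^ (2 * (m + e) - 2) = t ^ (2 * m - 2) * t * t ^ (2 * e - 1) := by
      rw [h1, pow_add, pow_add, pow_one]
    have A2 : t ^ (2 * (m + e) - 2) = t ^ (2 * m - 2) * t ^ (2 * e) := by
      rw [h2, pow_add]
    push_cast
    linear_combination (e : ℝ) ^ 2 * A0 + 2 * (m : ℝ) * (e : ℝ) * A1 + (m : ℝ) ^ 2 * A2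

lemma ES_union (k m : ℕ) (hm : k < m) (t : ℝ) :
    ES (Finset.Icc 0 k ∪ Finset.Icc m (m + k)) t
      = (1 + t ^ (2 * m - 2) * t ^ 2) ^ 2 * ES (Finset.Icc 0 k) t
        + (m : ℝ) ^ 2 * t ^ (2 * m - 2) * (gS (Finset.Icc 0 k) t) ^ 2 := by
  have hd : Disjoint (Finset.Icc 0 k) (Finset.Icc m (m + k)) := by
    rw [Finset.disjoint_left]
    intro a ha hb
    rw [Finset.mem_Icc] at ha hb
    omega
  have hm1 : 1 ≤ m := by omega
  have hg : gS (Finset.Icc 0 k ∪ Finset.Icc m (m + k)) t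
      = gS (Finset.Icc 0 k) t + gS (Finset.Icc m (m + k)) t := by
    unfold gS; rw [Finset.sum_union hd]
  have hq : qS (Finset.Icc 0 k ∪ Finset.Icc m (m + k)) t
      = qS (Finset.Icc 0 k) t + qS (Finset.Icc m (m + k)) t := by
    unfold qS; rw [Finset.sum_union hd]
  have hh : hS (Finset.Icc 0 k ∪ Finset.Icc m (m + k)) t
      = hS (Finset.Icc 0 k) t + hS (Finset.Icc m (m + k)) t := by
    unfold hS; rw [Finset.sum_union hd]
  unfold ES
  rw [hg, hq, hh, gS_shift k m hm1 t, qS_shift k m hm1 t, hS_shift k m hm1 t]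
  ring

lemma pointwise_bound (k m : ℕ) (hm : k < m) (t : ℝ) (ht0 : 0 ≤ t) :
    Real.sqrt (ES (Finset.Icc 0 k ∪ Finset.Icc m (m + k)) t)
        / gS (Finset.Icc 0 k ∪ Finset.Icc m (m + k)) t
      ≤ Real.sqrt (ES (Finset.Icc 0 k) t) / gS (Finset.Icc 0 k) t
        + (m : ℝ) * t ^ (m - 1) / (1 + t ^ (2 * m)) := by
  have hm1 : 1 ≤ m := by omega
  set G := gS (Finset.Icc 0 k) t with hGdef
  have hG1 : 1 ≤ G := gS_one_le _ (by simp) t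
  have hGpos : 0 < G := by linarith
  have hE0 : 0 ≤ ES (Finset.Icc 0 k) t := ES_nonneg _ _
  have hu0 : 0 ≤ t ^ (2 * m) := pow_even_nonneg t m
  have hupos : 0 < 1 + t ^ (2 * m) := by linarith
  have ha : t ^ (2 * m - 2) = (t ^ (m - 1)) ^ 2 := by
    rw [← pow_mul]; congr 1; omega
  have hat : t ^ (2 * m - 2) * t ^ 2 = t ^ (2 * m) := by
    rw [← pow_add]; congr 1; omega
  have hb0 : 0 ≤ (m : ℝ) * t ^ (m - 1) := by positivity
  have hs0 : 0 ≤ Real.sqrt (ES (Finset.Icc 0 k) t) := Real.sqrt_nonneg _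
  have key : Real.sqrt (ES (Finset.Icc 0 k ∪ Finset.Icc m (m + k)) t)
      ≤ (1 + t ^ (2 * m)) * Real.sqrt (ES (Finset.Icc 0 k) t) + (m : ℝ) * t ^ (m - 1) * G := by
    have h1 : ES (Finset.Icc 0 k ∪ Finset.Icc m (m + k)) t
        ≤ ((1 + t ^ (2 * m)) * Real.sqrt (ES (Finset.Icc 0 k) t) + (m : ℝ) * t ^ (m - 1) * G) ^ 2 := by
      rw [ES_union k m hm t, hat, ha]
      have hsq : Real.sqrt (ES (Finset.Icc 0 k) t) ^ 2 = ES (Finset.Icc 0 k) t :=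
        Real.sq_sqrt hE0
      nlinarith [mul_nonneg (mul_nonneg (le_of_lt hupos) hs0) (mul_nonneg hb0 (le_of_lt hGpos))]
    calc Real.sqrt (ES (Finset.Icc 0 k ∪ Finset.Icc m (m + k)) t)
        ≤ Real.sqrt (((1 + t ^ (2 * m)) * Real.sqrt (ES (Finset.Icc 0 k) t)
            + (m : ℝ) * t ^ (m - 1) * G) ^ 2) := Real.sqrt_le_sqrt h1
      _ = _ := Real.sqrt_sq (by positivity)
  have hgu : gS (Finset.Icc 0 k ∪ Finset.Icc m (m + k)) t = (1 + t ^ (2 * m)) * G := by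
    have hd : Disjoint (Finset.Icc 0 k) (Finset.Icc m (m + k)) := by
      rw [Finset.disjoint_left]
      intro a ha hb
      rw [Finset.mem_Icc] at ha hb
      omega
    have : gS (Finset.Icc 0 k ∪ Finset.Icc m (m + k)) t
        = gS (Finset.Icc 0 k) t + gS (Finset.Icc m (m + k)) t := by
      unfold gS; rw [Finset.sum_union hd]
    rw [this, gS_shift k m hm1 t, hat]
    ring
  rw [hgu]
  have hGne : G ≠ 0 := ne_of_gt hGpos
  have hune : (1 + t ^ (2 * m)) ≠ 0 := ne_of_gt hupos
  calc Real.sqrt (ES (Finset.Icc 0 k ∪ Finset.Icc m (m + k)) t) / ((1 + t ^ (2 * m)) * G)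
      ≤ ((1 + t ^ (2 * m)) * Real.sqrt (ES (Finset.Icc 0 k) t) + (m : ℝ) * t ^ (m - 1) * G)
          / ((1 + t ^ (2 * m)) * G) := by
        exact (div_le_div_iff_of_pos_right (mul_pos hupos hGpos)).mpr key
    _ = Real.sqrt (ES (Finset.Icc 0 k) t) / G + (m : ℝ) * t ^ (m - 1) / (1 + t ^ (2 * m)) := by
        field_simp

lemma integral_arctan (m : ℕ) (hm : 1 ≤ m) :
    ∫ t in (0:ℝ)..1, (m : ℝ) * t ^ (m - 1) / (1 + t ^ (2 * m)) = Real.pi / 4 := by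
  have hne : ∀ t : ℝ, 1 + t ^ (2 * m) ≠ 0 := fun t => by
    have := pow_even_nonneg t m; intro h; linarith [this]
  have hderiv : ∀ t ∈ Set.uIcc (0:ℝ) 1,
      HasDerivAt (fun s => Real.arctan (s ^ m)) ((m : ℝ) * t ^ (m - 1) / (1 + t ^ (2 * m))) t := by
    intro t _
    have h := (Real.hasDerivAt_arctan (t ^ m)).comp t (hasDerivAt_pow m t)
    have e : (m : ℝ) * t ^ (m - 1) / (1 + t ^ (2 * m)) = 1 / (1 + (t ^ m) ^ 2) * (↑m * t ^ (m - 1)) := by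
      rw [show (t ^ m) ^ 2 = t ^ (2 * m) from by rw [← pow_mul, mul_comm]]
      field_simp
    rw [e]; exact h
  have hint : IntervalIntegrable (fun t => (m : ℝ) * t ^ (m - 1) / (1 + t ^ (2 * m)))
      MeasureTheory.volume 0 1 := by
    apply Continuous.intervalIntegrable
    exact (continuous_const.mul (continuous_pow _)).div
      (continuous_const.add (continuous_pow _)) hne
  rw [intervalIntegral.integral_eq_sub_of_hasDerivAt hderiv hint]
  rw [one_pow, zero_pow (by omega : m ≠ 0)]
  simp [Real.arctan_one, Real.arctan_zero]

lemma part1 (k n : ℕ) (h : 2 * k < n) :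
    zS (Finset.Icc 0 k ∪ Finset.Icc (n - k) n) ≤ zS (Finset.Icc 0 k) + 1 / 4 := by
  set m := n - k with hmdef
  have hkm : k < m := by omega
  have hm1 : 1 ≤ m := by omega
  have hB : Finset.Icc (n - k) n = Finset.Icc m (m + k) := by
    rw [← hmdef]; congr 1; omega
  rw [hB]
  have h0U : (0 : ℕ) ∈ Finset.Icc 0 k ∪ Finset.Icc m (m + k) :=
    Finset.mem_union_left _ (by simp)
  have h0A : (0 : ℕ) ∈ Finset.Icc 0 k := by simp
  have int1 : IntervalIntegrable
      (fun t => Real.sqrt (ES (Finset.Icc 0 k ∪ Finset.Icc m (m + k)) t)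
        / gS (Finset.Icc 0 k ∪ Finset.Icc m (m + k)) t) MeasureTheory.volume 0 1 :=
    (cont_density _ h0U).intervalIntegrable 0 1
  have int2 : IntervalIntegrable
      (fun t => Real.sqrt (ES (Finset.Icc 0 k) t) / gS (Finset.Icc 0 k) t)
      MeasureTheory.volume 0 1 :=
    (cont_density _ h0A).intervalIntegrable 0 1
  have int3 : IntervalIntegrable (fun t => (m : ℝ) * t ^ (m - 1) / (1 + t ^ (2 * m)))
      MeasureTheory.volume 0 1 := by
    apply Continuous.intervalIntegrable
    exact (continuous_const.mul (continuous_pow _)).div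
      (continuous_const.add (continuous_pow _))
      (fun t => by have := pow_even_nonneg t m; intro hc; linarith)
  have hle : (∫ t in (0:ℝ)..1, Real.sqrt (ES (Finset.Icc 0 k ∪ Finset.Icc m (m + k)) t)
        / gS (Finset.Icc 0 k ∪ Finset.Icc m (m + k)) t)
      ≤ ∫ t in (0:ℝ)..1, (Real.sqrt (ES (Finset.Icc 0 k) t) / gS (Finset.Icc 0 k) t
        + (m : ℝ) * t ^ (m - 1) / (1 + t ^ (2 * m))) := by
    apply intervalIntegral.integral_mono_on (by norm_num) int1 (int2.add int3)
    intro t ht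
    exact pointwise_bound k m hkm t ht.1
  rw [intervalIntegral.integral_add int2 int3, integral_arctan m hm1] at hle
  unfold zS
  have hpi : 0 < Real.pi := Real.pi_pos
  calc (1 / Real.pi) * ∫ t in (0:ℝ)..1,
        Real.sqrt (ES (Finset.Icc 0 k ∪ Finset.Icc m (m + k)) t)
          / gS (Finset.Icc 0 k ∪ Finset.Icc m (m + k)) t
      ≤ (1 / Real.pi) * ((∫ t in (0:ℝ)..1,
          Real.sqrt (ES (Finset.Icc 0 k) t) / gS (Finset.Icc 0 k) t) + Real.pi / 4) := by
        apply mul_le_mul_of_nonneg_left hle (by positivity)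
    _ = (1 / Real.pi) * (∫ t in (0:ℝ)..1,
          Real.sqrt (ES (Finset.Icc 0 k) t) / gS (Finset.Icc 0 k) t) + 1 / 4 := by
        field_simp

lemma geom_bound (k : ℕ) (t : ℝ) (ht0 : 0 ≤ t) (ht1 : t ≤ 1) :
    (1 - t) * ∑ i ∈ Finset.range k, t ^ i ≤ 1 := by
  have h := geom_sum_mul t k
  have hpow : 0 ≤ t ^ k := pow_nonneg ht0 k
  nlinarith [h]

lemma hS_le (k : ℕ) (t : ℝ) (ht0 : 0 ≤ t) (ht1 : t ≤ 1) :
    hS (Finset.Icc 0 k) t ≤ gS (Finset.Icc 0 k) t * (∑ i ∈ Finset.range k, t ^ i) ^ 2 := by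
  have hstep1 : hS (Finset.Icc 0 k) t
      = ∑ i ∈ Finset.range k, ∑ j ∈ Finset.range k, ∑ e ∈ Finset.Icc 0 k,
          (if i < e then (1:ℝ) else 0) * (if j < e then (1:ℝ) else 0) * t ^ (2 * e - 2) := by
    have he : ∀ e ∈ Finset.Icc 0 k, (e : ℝ) ^ 2 * t ^ (2 * e - 2)
        = ∑ i ∈ Finset.range k, ∑ j ∈ Finset.range k,
            (if i < e then (1:ℝ) else 0) * (if j < e then (1:ℝ) else 0) * t ^ (2 * e - 2) := by
      intro e hme
      rw [Finset.mem_Icc] at hme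
      have hcard : ∑ i ∈ Finset.range k, (if i < e then (1:ℝ) else 0) = (e : ℝ) := by
        rw [Finset.sum_boole]
        congr 1
        have : (Finset.range k).filter (fun i => i < e) = Finset.range e := by
          ext i
          simp only [Finset.mem_filter, Finset.mem_range]
          omega
        rw [this, Finset.card_range]
      have hpair : ∑ i ∈ Finset.range k, ∑ j ∈ Finset.range k,
          (if i < e then (1:ℝ) else 0) * (if j < e then (1:ℝ) else 0) * t ^ (2 * e - 2)
          = (∑ i ∈ Finset.range k, (if i < e then (1:ℝ) else 0))
            * (∑ j ∈ Finset.range k, (if j < e then (1:ℝ) else 0)) * t ^ (2 * e - 2) := by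
        rw [Finset.sum_mul_sum, Finset.sum_mul]
        refine Finset.sum_congr rfl fun i _ => ?_
        rw [Finset.sum_mul]
      rw [hpair, hcard]
      ring
    unfold hS
    rw [Finset.sum_congr rfl he, Finset.sum_comm]
    refine Finset.sum_congr rfl fun i _ => ?_
    rw [Finset.sum_comm]
  have hstep2 : ∀ i ∈ Finset.range k, ∀ j ∈ Finset.range k,
      (∑ e ∈ Finset.Icc 0 k,
        (if i < e then (1:ℝ) else 0) * (if j < e then (1:ℝ) else 0) * t ^ (2 * e - 2))
      ≤ t ^ i * t ^ j * gS (Finset.Icc 0 k) t := by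
    intro i hi j hj
    rw [Finset.mem_range] at hi hj
    set M := max i j with hMdef
    have hMk : M < k := by omega
    have hsum : (∑ e ∈ Finset.Icc 0 k,
        (if i < e then (1:ℝ) else 0) * (if j < e then (1:ℝ) else 0) * t ^ (2 * e - 2))
        = ∑ e ∈ Finset.Icc (M + 1) k, t ^ (2 * e - 2) := by
      rw [show Finset.Icc (M + 1) k = (Finset.Icc 0 k).filter (fun e => M + 1 ≤ e) from by
        ext e; simp only [Finset.mem_filter, Finset.mem_Icc]; omega]
      rw [Finset.sum_filter]
      refine Finset.sum_congr rfl fun e _ => ?_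
      by_cases h1 : i < e <;> by_cases h2 : j < e <;>
        simp only [h1, h2, if_true, if_false, one_mul, zero_mul, mul_zero] <;>
        [rw [if_pos (by omega)]; rw [if_neg (by omega)]; rw [if_neg (by omega)];
          rw [if_neg (by omega)]]
    rw [hsum]
    have hmap : Finset.Icc (M + 1) k
        = Finset.map (addLeftEmbedding (M + 1)) (Finset.Icc 0 (k - (M + 1))) := by
      rw [Finset.map_add_left_Icc]
      congr 1 <;> omega
    rw [hmap, Finset.sum_map]
    have heq : ∀ e ∈ Finset.Icc 0 (k - (M + 1)),
        t ^ (2 * (addLeftEmbedding (M + 1)) e - 2) = t ^ (2 * M) * t ^ (2 * e) := by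
      intro e _
      simp only [addLeftEmbedding_apply]
      rw [← pow_add]
      congr 1
      omega
    rw [Finset.sum_congr rfl heq, ← Finset.mul_sum]
    have hsub : (∑ e ∈ Finset.Icc 0 (k - (M + 1)), t ^ (2 * e)) ≤ gS (Finset.Icc 0 k) t := by
      unfold gS
      apply Finset.sum_le_sum_of_subset_of_nonneg
      · exact Finset.Icc_subset_Icc_right (by omega)
      · intro e _ _
        exact pow_even_nonneg t e
    have hpowle : t ^ (2 * M) ≤ t ^ (i + j) :=
      pow_le_pow_of_le_one ht0 ht1 (by omega)
    calc t ^ (2 * M) * ∑ e ∈ Finset.Icc 0 (k - (M + 1)), t ^ (2 * e)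
        ≤ t ^ (i + j) * gS (Finset.Icc 0 k) t := by
          apply mul_le_mul hpowle hsub
          · exact Finset.sum_nonneg fun e _ => pow_even_nonneg t e
          · exact pow_nonneg ht0 _
      _ = t ^ i * t ^ j * gS (Finset.Icc 0 k) t := by rw [pow_add]
  rw [hstep1]
  have hfinal : (∑ i ∈ Finset.range k, ∑ j ∈ Finset.range k,
      t ^ i * t ^ j * gS (Finset.Icc 0 k) t)
      = gS (Finset.Icc 0 k) t * (∑ i ∈ Finset.range k, t ^ i) ^ 2 := by
    rw [sq, Finset.sum_mul_sum, Finset.mul_sum]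
    refine Finset.sum_congr rfl fun i _ => ?_
    rw [Finset.mul_sum]
    refine Finset.sum_congr rfl fun j _ => ?_
    ring
  rw [← hfinal]
  exact Finset.sum_le_sum fun i hi => Finset.sum_le_sum fun j hj => hstep2 i hi j hj

lemma dens_le_inv (k : ℕ) (t : ℝ) (ht0 : 0 ≤ t) (ht1 : t < 1) :
    Real.sqrt (ES (Finset.Icc 0 k) t) / gS (Finset.Icc 0 k) t ≤ (1 - t)⁻¹ := by
  set G := gS (Finset.Icc 0 k) t with hGdef
  have hGpos : 0 < G := gS_pos _ (by simp) t
  set P := ∑ i ∈ Finset.range k, t ^ i with hPdef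
  have hP0 : 0 ≤ P := Finset.sum_nonneg fun i _ => pow_nonneg ht0 i
  have h1t : 0 < 1 - t := by linarith
  have hP : P ≤ (1 - t)⁻¹ := by
    rw [inv_eq_one_div, le_div_iff₀ h1t]
    linarith [geom_bound k t ht0 (le_of_lt ht1), mul_comm (1 - t) P]
  have hEle : ES (Finset.Icc 0 k) t ≤ (G * P) ^ 2 := by
    have h1 : ES (Finset.Icc 0 k) t ≤ G * hS (Finset.Icc 0 k) t := by
      unfold ES
      have := sq_nonneg (qS (Finset.Icc 0 k) t)
      linarith
    have h2 : hS (Finset.Icc 0 k) t ≤ G * P ^ 2 := hS_le k t ht0 (le_of_lt ht1)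
    calc ES (Finset.Icc 0 k) t ≤ G * (G * P ^ 2) :=
          le_trans h1 (mul_le_mul_of_nonneg_left h2 (le_of_lt hGpos))
      _ = (G * P) ^ 2 := by ring
  have hsq : Real.sqrt (ES (Finset.Icc 0 k) t) ≤ G * P := by
    calc Real.sqrt (ES (Finset.Icc 0 k) t) ≤ Real.sqrt ((G * P) ^ 2) := Real.sqrt_le_sqrt hEle
      _ = G * P := Real.sqrt_sq (by positivity)
  calc Real.sqrt (ES (Finset.Icc 0 k) t) / G ≤ (G * P) / G := by
        exact div_le_div_of_nonneg_right hsq hGpos.le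
    _ = P := by field_simp
    _ ≤ (1 - t)⁻¹ := hP

lemma dens_le_2k (k : ℕ) (t : ℝ) (ht0 : 1 / 2 ≤ t) (ht1 : t ≤ 1) :
    Real.sqrt (ES (Finset.Icc 0 k) t) / gS (Finset.Icc 0 k) t ≤ 2 * k := by
  set G := gS (Finset.Icc 0 k) t with hGdef
  have hGpos : 0 < G := gS_pos _ (by simp) t
  have ht0' : (0:ℝ) ≤ t := by linarith
  have hh : hS (Finset.Icc 0 k) t ≤ 4 * (k : ℝ) ^ 2 * G := by
    rw [hGdef]
    unfold hS gS
    rw [Finset.mul_sum]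
    apply Finset.sum_le_sum
    intro e he
    rw [Finset.mem_Icc] at he
    rcases Nat.eq_zero_or_pos e with rfl | hepos
    · simp
    · have hek : (e : ℝ) ≤ (k : ℝ) := by exact_mod_cast he.2
      have hexp : t ^ (2 * e) = t ^ (2 * e - 2) * t ^ 2 := by
        rw [← pow_add]; congr 1; omega
      have hpnn : 0 ≤ t ^ (2 * e - 2) := by positivity
      have htsq : 1 / 4 ≤ t ^ 2 := by nlinarith
      have he0 : (0:ℝ) ≤ e := by positivity
      rw [hexp]
      have h1 : (e:ℝ) ^ 2 * t ^ (2 * e - 2) ≤ (k:ℝ) ^ 2 * t ^ (2 * e - 2) :=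
        mul_le_mul_of_nonneg_right (pow_le_pow_left₀ he0 hek 2) hpnn
      have h2 : t ^ (2 * e - 2) * (1 / 4) ≤ t ^ (2 * e - 2) * t ^ 2 :=
        mul_le_mul_of_nonneg_left htsq hpnn
      have hk2 : (0:ℝ) ≤ 4 * (k:ℝ) ^ 2 := by positivity
      have h3 : 4 * (k:ℝ) ^ 2 * (t ^ (2 * e - 2) * (1 / 4)) ≤ 4 * (k:ℝ) ^ 2 * (t ^ (2 * e - 2) * t ^ 2) :=
        mul_le_mul_of_nonneg_left h2 hk2
      nlinarith [h1, h3]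
  have hEle : ES (Finset.Icc 0 k) t ≤ (2 * (k:ℝ) * G) ^ 2 := by
    have h1 : ES (Finset.Icc 0 k) t ≤ G * hS (Finset.Icc 0 k) t := by
      unfold ES
      have := sq_nonneg (qS (Finset.Icc 0 k) t)
      linarith
    calc ES (Finset.Icc 0 k) t ≤ G * (4 * (k : ℝ) ^ 2 * G) :=
          le_trans h1 (mul_le_mul_of_nonneg_left hh (le_of_lt hGpos))
      _ = (2 * (k:ℝ) * G) ^ 2 := by ring
  have hsq : Real.sqrt (ES (Finset.Icc 0 k) t) ≤ 2 * (k:ℝ) * G := by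
    calc Real.sqrt (ES (Finset.Icc 0 k) t) ≤ Real.sqrt ((2 * (k:ℝ) * G) ^ 2) :=
          Real.sqrt_le_sqrt hEle
      _ = 2 * (k:ℝ) * G := Real.sqrt_sq (by positivity)
  calc Real.sqrt (ES (Finset.Icc 0 k) t) / G ≤ (2 * (k:ℝ) * G) / G :=
        div_le_div_of_nonneg_right hsq hGpos.le
    _ = 2 * k := by field_simp

lemma intA (k : ℕ) (hk : 2 ≤ k) :
    (∫ t in (0:ℝ)..1, Real.sqrt (ES (Finset.Icc 0 k) t) / gS (Finset.Icc 0 k) t)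
      ≤ Real.log k + 2 := by
  have hk2 : (2:ℝ) ≤ (k:ℝ) := by exact_mod_cast hk
  have hkpos : (0:ℝ) < (k:ℝ) := by linarith
  have hinvpos : (0:ℝ) < (k:ℝ)⁻¹ := by positivity
  have hinv : (k:ℝ)⁻¹ ≤ 1 / 2 := by
    rw [inv_eq_one_div, div_le_div_iff₀ hkpos (by norm_num)]
    linarith
  set c : ℝ := 1 - (k:ℝ)⁻¹ with hcdef
  have hc_half : 1 / 2 ≤ c := by simp only [hcdef]; linarith
  have hc0 : (0:ℝ) ≤ c := le_trans (by norm_num) hc_half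
  have hc1 : c < 1 := by simp only [hcdef]; linarith
  have hc1' : c ≤ 1 := le_of_lt hc1
  have h0A : (0 : ℕ) ∈ Finset.Icc 0 k := by simp
  have hfc : Continuous fun t => Real.sqrt (ES (Finset.Icc 0 k) t) / gS (Finset.Icc 0 k) t :=
    cont_density _ h0A
  have int_f0c : IntervalIntegrable (fun t => Real.sqrt (ES (Finset.Icc 0 k) t) / gS (Finset.Icc 0 k) t) MeasureTheory.volume 0 c := hfc.intervalIntegrable 0 c
  have int_fc1 : IntervalIntegrable (fun t => Real.sqrt (ES (Finset.Icc 0 k) t) / gS (Finset.Icc 0 k) t) MeasureTheory.volume c 1 := hfc.intervalIntegrable c 1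
  have hne : ∀ x ∈ Set.uIcc (0:ℝ) c, 1 - x ≠ 0 := by
    intro x hx
    rw [Set.uIcc_of_le hc0] at hx
    have : x ≤ c := hx.2
    have : (k:ℝ)⁻¹ ≤ 1 - x := by simp only [hcdef] at this; linarith
    linarith
  have cont_inv : ContinuousOn (fun t : ℝ => (1 - t)⁻¹) (Set.uIcc 0 c) :=
    ((continuous_const.sub continuous_id).continuousOn).inv₀ hne
  have int_inv : IntervalIntegrable (fun t : ℝ => (1 - t)⁻¹) MeasureTheory.volume 0 c :=
    cont_inv.intervalIntegrable
  have bound1 : (∫ t in (0:ℝ)..c, Real.sqrt (ES (Finset.Icc 0 k) t) / gS (Finset.Icc 0 k) t)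
      ≤ ∫ t in (0:ℝ)..c, (1 - t)⁻¹ := by
    apply intervalIntegral.integral_mono_on hc0 int_f0c int_inv
    intro t ht
    exact dens_le_inv k t ht.1 (lt_of_le_of_lt ht.2 hc1)
  have val1 : (∫ t in (0:ℝ)..c, (1 - t)⁻¹) = Real.log k := by
    have hderiv : ∀ t ∈ Set.uIcc (0:ℝ) c,
        HasDerivAt (fun s => -Real.log (1 - s)) ((1 - t)⁻¹) t := by
      intro t ht
      have h1 : HasDerivAt (fun s : ℝ => 1 - s) (-1) t := (hasDerivAt_id t).const_sub 1
      have h2 := (Real.hasDerivAt_log (hne t ht)).comp t h1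
      have h3 := h2.neg
      have e : (1 - t)⁻¹ = -((1 - t)⁻¹ * -1) := by ring
      rw [e]; exact h3
    rw [intervalIntegral.integral_eq_sub_of_hasDerivAt hderiv int_inv]
    have h1c : 1 - c = (k:ℝ)⁻¹ := by simp only [hcdef]; ring
    rw [h1c]
    simp [Real.log_inv]
  have bound2 : (∫ t in c..(1:ℝ), Real.sqrt (ES (Finset.Icc 0 k) t) / gS (Finset.Icc 0 k) t)
      ≤ ∫ t in c..(1:ℝ), (2 * (k:ℝ)) := by
    apply intervalIntegral.integral_mono_on hc1' int_fc1 intervalIntegrable_const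
    intro t ht
    exact dens_le_2k k t (le_trans hc_half ht.1) ht.2
  have val2 : (∫ t in c..(1:ℝ), (2 * (k:ℝ))) = 2 := by
    rw [intervalIntegral.integral_const]
    simp only [smul_eq_mul, hcdef]
    field_simp
    ring
  rw [← intervalIntegral.integral_add_adjacent_intervals int_f0c int_fc1]
  calc (∫ t in (0:ℝ)..c, Real.sqrt (ES (Finset.Icc 0 k) t) / gS (Finset.Icc 0 k) t)
        + ∫ t in c..(1:ℝ), Real.sqrt (ES (Finset.Icc 0 k) t) / gS (Finset.Icc 0 k) t
      ≤ Real.log k + 2 := by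
        rw [← val1, ← val2]
        exact add_le_add bound1 bound2

theorem stmt8 :
    (∀ k n : ℕ, 2 * k < n →
      zS (Finset.Icc 0 k ∪ Finset.Icc (n - k) n) ≤ zS (Finset.Icc 0 k) + 1 / 4) ∧
    (∃ C : ℝ, C > 0 ∧ ∀ k n : ℕ, 2 ≤ k → 2 * k < n →
      zS (Finset.Icc 0 k ∪ Finset.Icc (n - k) n) ≤ C * Real.log k) := by
  constructor
  · exact part1
  · refine ⟨3, by norm_num, ?_⟩
    intro k n hk h
    have h1 := part1 k n h
    have hpi : 0 < Real.pi := Real.pi_pos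
    have h2 : zS (Finset.Icc 0 k) ≤ (1 / Real.pi) * (Real.log k + 2) := by
      unfold zS
      exact mul_le_mul_of_nonneg_left (intA k hk) (by positivity)
    have hpi3 : (3:ℝ) < Real.pi := Real.pi_gt_three
    have hlog2 : (0.6931471803:ℝ) < Real.log 2 := Real.log_two_gt_d9
    have hlogk : Real.log 2 ≤ Real.log k := by
      apply Real.log_le_log (by norm_num)
      exact_mod_cast hk
    have hL : (0.69:ℝ) < Real.log k := by linarith
    have hfrac : (1 / Real.pi) * (Real.log k + 2) ≤ (1 / 3) * (Real.log k + 2) := by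
      apply mul_le_mul_of_nonneg_right _ (by linarith)
      apply one_div_le_one_div_of_le (by norm_num) (le_of_lt hpi3)
    linarith
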